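/- Let P₁,...,P_c : F^n → F be polynomials of degree at most d and suppose the factor rank of the collection (P₁,...,P_c) is at least 2r+1 with r ≥ 1, where the factor rank is min over nonzero λ ∈ F^c of the d*-rank of ∑λᵢPᵢ with d* = max_i deg(λᵢPᵢ). Then the Schmidt rank of the collection, defined as min over nonzero λ of SchmidtRank(∑ λᵢ h(Pᵢ)) where h is the top-degree homogeneous part, is at least r. -/

import Mathlib

open MvPolynomial

lemma totalDegree_C_mul_le' {σ F : Type*} [Field F] (a : F) (p : MvPolynomial σ F) :
    (C a * p).totalDegree ≤ p.totalDegree := by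
  refine le_trans (totalDegree_mul _ _) ?_
  simp [totalDegree_C]

lemma totalDegree_le_C_mul' {σ F : Type*} [Field F] {a : F} (ha : a ≠ 0)
    (p : MvPolynomial σ F) : p.totalDegree ≤ (C a * p).totalDegree := by
  have : p = C a⁻¹ * (C a * p) := by
    rw [← mul_assoc, ← C_mul, inv_mul_cancel₀ ha, C_1, one_mul]
  conv_lhs => rw [this]
  exact totalDegree_C_mul_le' _ _

lemma eq_C_of_totalDegree_eq_zero' {σ F : Type*} [Field F] {p : MvPolynomial σ F}
    (h : p.totalDegree = 0) : p = C (coeff 0 p) := by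
  classical
  ext m
  by_cases hm : m = 0
  · simp [hm]
  · rw [coeff_C, if_neg (Ne.symm hm)]
    apply coeff_eq_zero_of_totalDegree_lt
    rw [h]
    obtain ⟨i, hi⟩ := Finsupp.support_nonempty_iff.2 hm
    calc 0 < m i := Nat.pos_of_ne_zero (Finsupp.mem_support_iff.1 hi)
      _ ≤ ∑ i ∈ m.support, m i := Finset.single_le_sum (fun _ _ => Nat.zero_le _) hi

lemma sub_top_component_lt {σ F : Type*} [Field F] (p : MvPolynomial σ F) {d : ℕ}
    (hd : 0 < d) (hp : p.totalDegree ≤ d) :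
    (p - homogeneousComponent p.totalDegree p).totalDegree < d := by
  rw [totalDegree]
  rw [Finset.sup_lt_iff (by simpa using hd)]
  intro m hm
  by_contra hcon
  push_neg at hcon
  apply MvPolynomial.mem_support_iff.1 hm
  have hmd : m.degree = m.sum fun _ e => e := by
    simp [Finsupp.degree, Finsupp.sum]
    rfl
  rw [coeff_sub, coeff_homogeneousComponent]
  rcases eq_or_lt_of_le (le_trans hp hcon) with h | h
  · rw [hmd, ← h, if_pos rfl, sub_self]
  · rw [if_neg, coeff_eq_zero_of_totalDegree_lt, sub_zero]
    · simpa [Finsupp.degree, Finsupp.sum] using h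
    · rw [hmd]; omega


/-- If the factor rank of a collection `(P₁,…,P_c)` of degree-`≤ d` polynomials is
at least `2r+1` (with `r ≥ 1`) — i.e. for every nonzero `λ`, any computation of
`∑ λᵢPᵢ` from polynomials of degree `< d*` (where `d* = max_i deg(λᵢPᵢ)`) uses at
least `2r+1` of them — then the Schmidt rank of the collection is at least `r`:
for every nonzero `λ`, any Schmidt decomposition of `∑ λᵢ·h(Pᵢ)` (into products of
pairs of polynomials of degree strictly below its total degree) has at least `r`
summands. -/
theorem stmt10 {F : Type*} [Field F] [Fintype F] (n c d r : ℕ) (hr : 1 ≤ r)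
    (P : Fin c → MvPolynomial (Fin n) F) (hPd : ∀ i, (P i).totalDegree ≤ d)
    (hfrank : ∀ lam : Fin c → F, lam ≠ 0 →
      ∀ (m : ℕ) (Q : Fin m → MvPolynomial (Fin n) F) (Γ : (Fin m → F) → F),
        (∀ i, (Q i).totalDegree <
          Finset.univ.sup fun j => (C (lam j) * P j).totalDegree) →
        (∀ x, eval x (∑ i, C (lam i) * P i) = Γ fun i => eval x (Q i)) →
        2 * r + 1 ≤ m) :
    ∀ lam : Fin c → F, lam ≠ 0 →
      ∀ (s : ℕ) (A B : Fin s → MvPolynomial (Fin n) F),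
        (∀ i, (A i).totalDegree <
            (∑ j, C (lam j) * homogeneousComponent (P j).totalDegree (P j)).totalDegree ∧
          (B i).totalDegree <
            (∑ j, C (lam j) * homogeneousComponent (P j).totalDegree (P j)).totalDegree) →
        homogeneousComponent
            (∑ j, C (lam j) * homogeneousComponent (P j).totalDegree (P j)).totalDegree
            (∑ j, C (lam j) * homogeneousComponent (P j).totalDegree (P j)) =
          ∑ i, A i * B i →
        r ≤ s := by
  intro lam hlam s A B hAB hdecomp
  set T : MvPolynomial (Fin n) F := ∑ j, C (lam j) * P j with hT
  set S : MvPolynomial (Fin n) F :=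
    ∑ j, C (lam j) * homogeneousComponent (P j).totalDegree (P j) with hS
  set H : MvPolynomial (Fin n) F := homogeneousComponent S.totalDegree S with hH
  set dstar : ℕ := Finset.univ.sup fun j => (C (lam j) * P j).totalDegree with hdstar
  rcases Nat.eq_zero_or_pos dstar with hd0 | hd1
  · -- all λⱼPⱼ constant : T is constant, use m = 0
    exfalso
    have hT0 : T.totalDegree = 0 := by
      refine Nat.le_zero.1 (le_trans (totalDegree_finset_sum _ _) ?_)
      rw [← hd0]
    have hTC : T = C (coeff 0 T) := eq_C_of_totalDegree_eq_zero' hT0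
    have := hfrank lam hlam 0 (fun _ => 0) (fun _ => coeff 0 T)
      (fun i => i.elim0) (fun x => by show eval x T = _; rw [hTC]; simp)
    omega
  · -- dstar ≥ 1 : build a computation with 2s+1 polynomials
    have hPle : ∀ j, lam j ≠ 0 → (P j).totalDegree ≤ dstar := fun j hj =>
      le_trans (totalDegree_le_C_mul' hj _) (Finset.le_sup (f := fun j => (C (lam j) * P j).totalDegree) (Finset.mem_univ j))
    have hDd : S.totalDegree ≤ dstar := by
      refine le_trans (totalDegree_finset_sum _ _) (Finset.sup_le fun j _ => ?_)
      by_cases hj : lam j = 0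
      · simp [hj]
      · exact le_trans (totalDegree_C_mul_le' _ _)
          (le_trans (homogeneousComponent_isHomogeneous _ _).totalDegree_le (hPle j hj))
    set R : MvPolynomial (Fin n) F := T - H with hR
    have hRlt : R.totalDegree < dstar := by
      have hid : R = (∑ j, C (lam j) *
          (P j - homogeneousComponent (P j).totalDegree (P j))) + (S - H) := by
        simp only [mul_sub, Finset.sum_sub_distrib, hR, hT, hS]
        abel
      rw [hid]
      refine lt_of_le_of_lt (totalDegree_add _ _) (max_lt ?_ ?_)
      · refine lt_of_le_of_lt (totalDegree_finset_sum _ _) ?_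
        rw [Finset.sup_lt_iff (by simpa using hd1)]
        intro j _
        by_cases hj : lam j = 0
        · simpa [hj] using hd1
        · exact lt_of_le_of_lt (totalDegree_C_mul_le' _ _)
            (sub_top_component_lt (P j) hd1 (hPle j hj))
      · exact sub_top_component_lt S hd1 hDd
    -- the computation
    set Q : Fin (s + s + 1) → MvPolynomial (Fin n) F :=
      Fin.snoc (Fin.append A B) R with hQ
    have key := hfrank lam hlam (s + s + 1) Q
      (fun y => y (Fin.last (s + s)) +
        ∑ i : Fin s, y (Fin.castSucc (Fin.castAdd s i)) *
          y (Fin.castSucc (Fin.natAdd s i))) ?_ ?_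
    · omega
    · intro i
      refine Fin.lastCases ?_ (fun i => ?_) i
      · simp only [hQ, Fin.snoc_last]; exact hRlt
      · rw [hQ]
        simp only [Fin.snoc_castSucc]
        refine Fin.addCases (fun i => ?_) (fun i => ?_) i
        · rw [Fin.append_left]
          exact lt_of_lt_of_le (hAB i).1 hDd
        · rw [Fin.append_right]
          exact lt_of_lt_of_le (hAB i).2 hDd
    · intro x
      have hTRH : T = R + ∑ i, A i * B i := by
        rw [← hdecomp, hR]; ring
      simp only [Fin.snoc_last, Fin.snoc_castSucc, Fin.append_left, Fin.append_right, hQ]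
      rw [← hT, hTRH]
      simp [map_sum]
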